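/- Let d≥2 and let C be a pure normal simplicial complex of dimension d−1 on n vertices. Then the diameter of the dual graph of C is at most n·2^{d−2}. -/

import Mathlib

/-! Common definitions: pure simplicial complexes (represented by their facet sets),
vertex-distance, links, ordered facets, vectors of distances, admissibility, and
monotone/conservative dual paths, following Adiprasito–Benedetti's combinatorial
segments. -/

open scoped Classical

noncomputable section

namespace MCP

variable {V : Type} [DecidableEq V] [Fintype V]

/-- The vertex set of the complex whose set of facets is `C`. -/
def verts (C : Finset (Finset V)) : Finset V := C.sup id

/-- `f` is a face of the pure complex with facet set `C`. -/
def IsFace (C : Finset (Finset V)) (f : Finset V) : Prop := ∃ F ∈ C, f ⊆ F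

/-- `C` is pure of dimension `d - 1`: every facet has `d` vertices. -/
def Pure (C : Finset (Finset V)) (d : ℕ) : Prop := ∀ F ∈ C, F.card = d

/-- The 1-skeleton of the complex: two vertices are joined iff they lie in a common facet. -/
def skeleton (C : Finset (Finset V)) : SimpleGraph V where
  Adj u v := u ≠ v ∧ ∃ F ∈ C, u ∈ F ∧ v ∈ F
  symm := by
    refine ⟨?_⟩
    rintro u v ⟨h, F, hF, hu, hv⟩
    exact ⟨h.symm, F, hF, hv, hu⟩
  loopless := by refine ⟨?_⟩; rintro u ⟨h, -⟩; exact h rfl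

/-- Two facets are adjacent in the dual graph iff they differ in a single vertex. -/
def AdjFacets (F G : Finset V) : Prop :=
  F ≠ G ∧ F.card = G.card ∧ (F ∩ G).card + 1 = F.card

/-- A dual path: a list of facets of `C` in which consecutive facets are adjacent. -/
def IsDualPath (C : Finset (Finset V)) (P : List (Finset V)) : Prop :=
  (∀ F ∈ P, F ∈ C) ∧ P.Chain' AdjFacets

/-- `C` is normal: for every face `f`, any two facets containing `f` are joined by a
dual path all of whose facets contain `f`. -/
def Normal (C : Finset (Finset V)) : Prop :=
  ∀ f : Finset V, ∀ F ∈ C, ∀ G ∈ C, f ⊆ F → f ⊆ G →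
    ∃ P : List (Finset V), P.head? = some F ∧ P.getLast? = some G ∧
      (∀ H ∈ P, H ∈ C ∧ f ⊆ H) ∧ P.Chain' AdjFacets

/-- The (facet set of the) link of a vertex `x` in `C`. -/
def link (C : Finset (Finset V)) (x : V) : Finset (Finset V) :=
  (C.filter (fun F => x ∈ F)).image (fun F => F.erase x)

/-- Vertex-distance (in the 1-skeleton) between two sets of vertices, with value `⊤`
if one of the sets is empty, and with the special `0/1` convention when the complex
is `0`-dimensional. -/
def vdistSets (C : Finset (Finset V)) (S T : Finset V) : ℕ∞ :=
  if C.sup Finset.card ≤ 1 then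
    (if S.Nonempty ∧ T.Nonempty then (if (S ∩ T).Nonempty then 0 else 1) else ⊤)
  else ⨅ u ∈ S, ⨅ v ∈ T, (skeleton C).edist u v

/-- The derived target set `S'` in the link of `x`, used in the recursive definitions
of the vector of distances and of admissibility. -/
def targetSet (C : Finset (Finset V)) (x : V) (S : Finset V) : Finset V :=
  if x ∈ S then S ∩ verts (link C x)
  else (verts (link C x)).filter
    (fun w => vdistSets C {w} S + 1 = vdistSets C {x} S)

/-- The vector of distances from an ordered facet (a list of vertices) to a target set. -/
def distVector : Finset (Finset V) → List V → Finset V → List ℕ∞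
  | _, [], _ => []
  | C, x :: rest, S => vdistSets C {x} S :: distVector (link C x) rest (targetSet C x S)

/-- Admissibility of an ordering of a facet with respect to a target set: the first
vertex realizes the vertex-distance from the facet to the target set, and recursively
in the link. -/
def Admissible : Finset (Finset V) → List V → Finset V → Prop
  | _, [], _ => True
  | C, x :: rest, S =>
      vdistSets C {x} S = vdistSets C (x :: rest).toFinset S ∧
      Admissible (link C x) rest (targetSet C x S)

/-- An ordered facet of `C`: a repetition-free list of vertices forming a facet. -/
def IsOrderedFacet (C : Finset (Finset V)) (L : List V) : Prop :=
  L.Nodup ∧ L.toFinset ∈ C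

/-- A dual path of ordered facets. -/
def IsOrderedDualPath (C : Finset (Finset V)) (Γ : List (List V)) : Prop :=
  (∀ L ∈ Γ, IsOrderedFacet C L) ∧
  Γ.Chain' (fun L M => AdjFacets L.toFinset M.toFinset)

/-- A path of ordered facets is monotone towards `S` if its vectors of distances are
strictly lexicographically decreasing. -/
def MonotonePath (C : Finset (Finset V)) (S : Finset V) (Γ : List (List V)) : Prop :=
  Γ.Chain' (fun L M => List.Lex (· < ·) (distVector C M S) (distVector C L S))

/-- The index of a step: the least position at which the two orderings differ. -/
def stepIndex (L M : List V) : ℕ := sInf {k : ℕ | L[k]? ≠ M[k]?}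

/-- The step from `L` to `M` is conservative towards `S`: the removed vertex is the last
vertex of `L`, and `M` is admissibly ordered with maximum index among all admissible
reorderings. -/
def ConservativeStep (C : Finset (Finset V)) (S : Finset V) (L M : List V) : Prop :=
  (∃ x, L.getLast? = some x ∧ L.toFinset \ M.toFinset = {x}) ∧
  Admissible C M S ∧
  ∀ M' : List V, M'.Perm M → Admissible C M' S → stepIndex L M' ≤ stepIndex L M

/-- A path of ordered facets is conservative towards `S` if its first facet is
admissibly ordered and every step is conservative. -/
def ConservativePath (C : Finset (Finset V)) (S : Finset V) (Γ : List (List V)) : Prop :=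
  (∀ L ∈ Γ.head?, Admissible C L S) ∧ Γ.Chain' (ConservativeStep C S)

/-- A monotone conservative dual path of ordered facets towards `S`. -/
def MonoConsPath (C : Finset (Finset V)) (S : Finset V) (Γ : List (List V)) : Prop :=
  IsOrderedDualPath C Γ ∧ MonotonePath C S Γ ∧ ConservativePath C S Γ

/-- The path `Γ` starts at the facet `F`. -/
def StartsAt (Γ : List (List V)) (F : Finset V) : Prop :=
  ∃ L, Γ.head? = some L ∧ L.toFinset = F

/-- The path `Γ` ends at the facet `F`. -/
def EndsAt (Γ : List (List V)) (F : Finset V) : Prop :=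
  ∃ L, Γ.getLast? = some L ∧ L.toFinset = F

/-- `C` is flag: every set of vertices of `C` pairwise joined by edges of `C` is a face. -/
def Flag (C : Finset (Finset V)) : Prop :=
  ∀ T : Finset V, T ⊆ verts C →
    (∀ u ∈ T, ∀ v ∈ T, u ≠ v → (skeleton C).Adj u v) → IsFace C T

/-- A critical clique: a clique of the 1-skeleton that becomes a face after removing a
suitable vertex. -/
def CriticalClique (C : Finset (Finset V)) (T : Finset V) : Prop :=
  (∀ u ∈ T, ∀ v ∈ T, u ≠ v → (skeleton C).Adj u v) ∧ ∃ v ∈ T, IsFace C (T.erase v)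

/-- `C` is `k`-banner: every critical clique with at least `k + 1` vertices is a face. -/
def Banner (C : Finset (Finset V)) (k : ℕ) : Prop :=
  ∀ T : Finset V, CriticalClique C T → k + 1 ≤ T.card → IsFace C T

/-- A pure `(d-1)`-complex is a pseudomanifold (possibly with boundary) if every
`(d-2)`-dimensional face lies in at most two facets. -/
def Pseudomanifold (C : Finset (Finset V)) (d : ℕ) : Prop :=
  ∀ f : Finset V, f.card + 1 = d → IsFace C f → (C.filter (fun F => f ⊆ F)).card ≤ 2

/-- A pure `(d-1)`-complex is a pseudomanifold without boundary if every
`(d-2)`-dimensional face lies in exactly two facets. -/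
def PseudomanifoldNoBoundary (C : Finset (Finset V)) (d : ℕ) : Prop :=
  ∀ f : Finset V, f.card + 1 = d → IsFace C f → (C.filter (fun F => f ⊆ F)).card = 2

/-- The join of two complexes (given by their facet sets, on disjoint vertex sets). -/
def join (C₁ C₂ : Finset (Finset V)) : Finset (Finset V) :=
  (C₁ ×ˢ C₂).image (fun p => p.1 ∪ p.2)

/-- The one-point-suspension of `C` at the vertex `v`; the two new suspension vertices
are `Sum.inr false` and `Sum.inr true`. -/
def ops (C : Finset (Finset V)) (v : V) : Finset (Finset (V ⊕ Bool)) :=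
  ((C.filter (fun F => v ∈ F)).image
      (fun F => ((F.erase v).image Sum.inl) ∪ {Sum.inr false, Sum.inr true}))
  ∪ ((C.filter (fun F => v ∉ F)).image (fun F => (F.image Sum.inl) ∪ {Sum.inr false}))
  ∪ ((C.filter (fun F => v ∉ F)).image (fun F => (F.image Sum.inl) ∪ {Sum.inr true}))

/-- The degree of a vertex in the 1-skeleton of `C`. -/
def degree (C : Finset (Finset V)) (x : V) : ℕ :=
  (Finset.univ.filter fun w => (skeleton C).Adj x w).card

/-- Vertex-decomposability of a pure complex given by its facet set: either a single
simplex, or there is a vertex whose deletion stays pure of the same dimension and whose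
link and deletion are both vertex-decomposable.  (The condition
`∀ F ∈ C, ∃ G ∈ C, x ∉ G ∧ F.erase x ⊆ G` expresses that the deletion of `x` is pure
of the same dimension, so that its facets are the facets of `C` avoiding `x`.) -/
inductive VertexDecomposable : Finset (Finset V) → Prop
  | simplex (F : Finset V) : VertexDecomposable {F}
  | step (C : Finset (Finset V)) (x : V) (hx : x ∈ verts C)
      (hdelpure : ∀ F ∈ C, ∃ G ∈ C, x ∉ G ∧ F.erase x ⊆ G)
      (hlink : VertexDecomposable (link C x))
      (hdel : VertexDecomposable (C.filter (fun F => x ∉ F))) :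
      VertexDecomposable C

/-- The maximum length (number of steps) of a monotone conservative path in `C`, over
all nonempty target sets of vertices of `C`. -/
def maxl (C : Finset (Finset V)) : ℕ :=
  sSup {n : ℕ | ∃ (S : Finset V) (Γ : List (List V)), S.Nonempty ∧ S ⊆ verts C ∧
    MonoConsPath C S Γ ∧ Γ.length = n + 1}

/-- `CombSeg C Γ S x₀`: the dual path `Γ` is a combinatorial segment in `C` from its
first facet to the target set `S`, anchored at `x₀` (Adiprasito–Benedetti). -/
inductive CombSeg : Finset (Finset V) → List (Finset V) → Finset V → V → Prop
  | intersects (C : Finset (Finset V)) (F S : Finset V) (x₀ : V)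
      (hF : F ∈ C) (hx : x₀ ∈ F) (hFS : (F ∩ S).Nonempty) :
      CombSeg C [F] S x₀
  | dimOne (C : Finset (Finset V)) (S : Finset V) (x₀ v : V)
      (hdim : ∀ F ∈ C, F.card = 1)
      (h₁ : {x₀} ∈ C) (h₂ : {v} ∈ C) (hx : x₀ ∉ S) (hv : v ∈ S) :
      CombSeg C [{x₀}, {v}] S x₀
  | step (C : Finset (Finset V)) (F₀ : Finset V) (Γ₁ Γ₂ : List (Finset V))
      (Fk S : Finset V) (x₀ y x₀' : V) (ℓ : ℕ∞)
      (hdim : ∀ F ∈ C, 2 ≤ F.card)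
      (hmem : ∀ F ∈ F₀ :: Γ₁, F ∈ C)
      (hdisj : ∀ F ∈ F₀ :: Γ₁, F ∩ S = ∅)
      (hℓ : vdistSets C F₀ S = ℓ)
      (hbefore : ∀ F ∈ F₀ :: Γ₁, ¬ vdistSets C F S < ℓ)
      (hafter : vdistSets C Fk S < ℓ)
      (hy : y ∈ Fk)
      (hyd : vdistSets C {y} S + 1 = ℓ)
      (hyuniq : ∀ z ∈ Fk, vdistSets C {z} S + 1 = ℓ → z = y)
      (hx₀ : ∀ F ∈ F₀ :: Γ₁, x₀ ∈ F) (hx₀k : x₀ ∈ Fk)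
      (hlink : CombSeg (link C x₀)
          (((F₀ :: Γ₁) ++ [Fk]).map (fun F => F.erase x₀))
          ((verts (link C x₀)).filter (fun w => vdistSets C {w} S + 1 = ℓ)) x₀')
      (htail : CombSeg C (Fk :: Γ₂) S y) :
      CombSeg C (F₀ :: Γ₁ ++ Fk :: Γ₂) S x₀

end MCP

set_option linter.unusedSectionVars false
namespace BL
open MCP Finset
variable {V : Type} [DecidableEq V] [Fintype V]

/-! ### drops -/

def drops (w : V) : List (Finset V) → ℕ
  | X :: Y :: t => (if w ∈ X ∧ w ∉ Y then 1 else 0) + drops w (Y :: t)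
  | _ => 0

lemma drops_nil (w : V) : drops w ([] : List (Finset V)) = 0 := rfl
lemma drops_single (w : V) (X : Finset V) : drops w [X] = 0 := rfl
lemma drops_cons_cons (w : V) (X Y : Finset V) (t : List (Finset V)) :
    drops w (X :: Y :: t) = (if w ∈ X ∧ w ∉ Y then 1 else 0) + drops w (Y :: t) := rfl

lemma drops_eq_zero_of_not_mem {w : V} :
    ∀ {P : List (Finset V)}, (∀ X ∈ P, w ∉ X) → drops w P = 0
  | [], _ => rfl
  | [X], _ => rfl
  | X :: Y :: t, h => by
    rw [drops_cons_cons, if_neg (fun hc => h X (by simp) hc.1),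
      drops_eq_zero_of_not_mem (fun Z hZ => h Z (List.mem_cons_of_mem _ hZ))]

lemma adjFacets_sdiff_card {X Y : Finset V} (h : AdjFacets X Y) : (X \ Y).card = 1 := by
  obtain ⟨-, -, hc⟩ := h
  have := Finset.card_sdiff_add_card_inter X Y
  omega

lemma length_eq_sum_drops :
    ∀ {P : List (Finset V)}, P.Chain' AdjFacets → P.length - 1 = ∑ w, drops w P
  | [], _ => by simp [drops_nil]
  | [X], _ => by simp [drops_single]
  | X :: Y :: t, h => by
    have h1 : AdjFacets X Y := (List.isChain_cons_cons.mp h).1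
    have h2 : (Y :: t).Chain' AdjFacets := (List.isChain_cons_cons.mp h).2
    have IH := length_eq_sum_drops h2
    have hsum : ∑ w, drops w (X :: Y :: t)
        = (X \ Y).card + ∑ w, drops w (Y :: t) := by
      simp only [drops_cons_cons, Finset.sum_add_distrib]
      congr 1
      rw [Finset.card_eq_sum_ones, ← Finset.sum_filter]
      congr 1
      ext z
      simp [Finset.mem_sdiff]
    rw [hsum, adjFacets_sdiff_card h1, ← IH]
    simp only [List.length_cons]
    omega

/-! ### glue -/

def glue (P Q : List (Finset V)) : List (Finset V) := P ++ Q.tail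

lemma glue_ne_nil {P Q : List (Finset V)} (hP : P ≠ []) : glue P Q ≠ [] := by
  simp [glue, hP]

lemma glue_head? {P Q : List (Finset V)} (hP : P ≠ []) :
    (glue P Q).head? = P.head? := by
  cases P with
  | nil => exact absurd rfl hP
  | cons a t => rfl

lemma glue_getLast? {P Q : List (Finset V)} (hP : P ≠ []) {H : Finset V}
    (h1 : P.getLast? = some H) (h2 : Q.head? = some H) :
    (glue P Q).getLast? = Q.getLast? := by
  cases Q with
  | nil => simp at h2
  | cons b s =>
    simp only [List.head?_cons, Option.some_inj] at h2
    subst h2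
    cases s with
    | nil => simpa [glue] using h1
    | cons c u =>
      simp only [glue, List.tail_cons]
      rw [List.getLast?_append_cons]
      simp [List.getLast?_cons_cons]

lemma glue_mem {P Q : List (Finset V)} {X : Finset V} (h : X ∈ glue P Q) :
    X ∈ P ∨ X ∈ Q := by
  rcases List.mem_append.mp h with h | h
  · exact Or.inl h
  · exact Or.inr (List.mem_of_mem_tail h)

lemma glue_chain' {P Q : List (Finset V)} {H : Finset V}
    (h1 : P.getLast? = some H) (h2 : Q.head? = some H)
    (hP : P.Chain' AdjFacets) (hQ : Q.Chain' AdjFacets) :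
    (glue P Q).Chain' AdjFacets := by
  cases Q with
  | nil => simpa [glue] using hP
  | cons b s =>
    simp only [List.head?_cons, Option.some_inj] at h2
    subst h2
    apply List.IsChain.append hP ((List.isChain_cons.mp hQ).2)
    intro x hx y hy
    rw [h1] at hx
    cases hx
    exact (List.isChain_cons.mp hQ).1 y hy

lemma glue_drops {w : V} :
    ∀ {P : List (Finset V)}, ∀ {Q : List (Finset V)}, ∀ {H : Finset V},
      P.getLast? = some H → Q.head? = some H →
      drops w (glue P Q) = drops w P + drops w Q
  | [], _, _, h1, _ => by simp at h1
  | [X], Q, H, h1, h2 => by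
    simp only [List.getLast?_singleton, Option.some_inj] at h1
    subst h1
    cases Q with
    | nil => simp at h2
    | cons b s =>
      simp only [List.head?_cons, Option.some_inj] at h2
      subst h2
      simp [glue, drops_single]
  | X :: Y :: t, Q, H, h1, h2 => by
    have h1' : (Y :: t).getLast? = some H := by
      rw [← h1]; simp [List.getLast?_cons_cons]
    have : glue (X :: Y :: t) Q = X :: glue (Y :: t) Q := rfl
    rw [this]
    have h3 : glue (Y :: t) Q = Y :: (t ++ Q.tail) := rfl
    rw [h3, drops_cons_cons, ← h3, glue_drops h1' h2, drops_cons_cons]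
    omega

lemma glue_dropLast_mem {P Q : List (Finset V)} {H X : Finset V}
    (h1 : P.getLast? = some H) (h2 : Q.head? = some H) (h : X ∈ (glue P Q).dropLast) :
    X ∈ P.dropLast ∨ X ∈ Q.dropLast := by
  cases Q with
  | nil => simp at h2
  | cons b s =>
    simp only [List.head?_cons, Option.some_inj] at h2
    subst h2
    cases s with
    | nil =>
      simp only [glue, List.tail_cons, List.append_nil] at h
      exact Or.inl h
    | cons c u =>
      simp only [glue, List.tail_cons] at h
      rw [List.dropLast_append_cons] at h
      rcases List.mem_append.mp h with h | h
      · rcases List.mem_append.mp ((List.dropLast_append_getLast? _ h1).symm ▸ h : X ∈ P.dropLast ++ [b]) with h | h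
        · exact Or.inl h
        · right
          rw [List.mem_singleton.mp h, List.dropLast_cons₂]
          simp
      · right
        show X ∈ (b :: c :: u).dropLast
        rw [List.dropLast_cons₂]
        exact List.mem_cons_of_mem _ h

/-! ### link lemmas -/

lemma mem_link_iff {C : Finset (Finset V)} {x : V} {f : Finset V} :
    f ∈ link C x ↔ ∃ F ∈ C, x ∈ F ∧ f = F.erase x := by
  simp only [link, Finset.mem_image, Finset.mem_filter]
  constructor
  · rintro ⟨F, ⟨hF, hx⟩, rfl⟩; exact ⟨F, hF, hx, rfl⟩
  · rintro ⟨F, hF, hx, rfl⟩; exact ⟨F, ⟨hF, hx⟩, rfl⟩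

lemma not_mem_of_mem_link {C : Finset (Finset V)} {x : V} {f : Finset V}
    (h : f ∈ link C x) : x ∉ f := by
  obtain ⟨F, -, -, rfl⟩ := mem_link_iff.mp h
  exact Finset.notMem_erase x F

lemma insert_mem_of_mem_link {C : Finset (Finset V)} {x : V} {f : Finset V}
    (h : f ∈ link C x) : insert x f ∈ C := by
  obtain ⟨F, hF, hx, rfl⟩ := mem_link_iff.mp h
  rwa [Finset.insert_erase hx]

lemma erase_mem_link {C : Finset (Finset V)} {x : V} {F : Finset V}
    (hF : F ∈ C) (hx : x ∈ F) : F.erase x ∈ link C x :=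
  mem_link_iff.mpr ⟨F, hF, hx, rfl⟩

lemma link_pure {C : Finset (Finset V)} {x : V} {k : ℕ} (hp : Pure C k) :
    Pure (link C x) (k - 1) := by
  intro f hf
  obtain ⟨F, hF, hx, rfl⟩ := mem_link_iff.mp hf
  rw [Finset.card_erase_of_mem hx, hp F hF]

lemma mem_verts_of_mem_facet {C : Finset (Finset V)} {F : Finset V} {w : V}
    (hF : F ∈ C) (hw : w ∈ F) : w ∈ verts C := by
  rw [verts, Finset.mem_sup]
  exact ⟨F, hF, hw⟩

lemma adj_of_mem_verts_link {C : Finset (Finset V)} {x w : V}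
    (h : w ∈ verts (link C x)) : (skeleton C).Adj x w := by
  rw [verts, Finset.mem_sup] at h
  obtain ⟨f, hf, hw⟩ := h
  obtain ⟨F, hF, hx, rfl⟩ := mem_link_iff.mp hf
  exact ⟨(Finset.ne_of_mem_erase hw).symm, F, hF, hx, Finset.mem_of_mem_erase hw⟩

lemma adjFacets_erase {F G : Finset V} {x : V} (h : AdjFacets F G)
    (hxF : x ∈ F) (hxG : x ∈ G) : AdjFacets (F.erase x) (G.erase x) := by
  obtain ⟨hne, hcard, hint⟩ := h
  refine ⟨fun hc => hne ?_, ?_, ?_⟩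
  · rw [← Finset.insert_erase hxF, ← Finset.insert_erase hxG, hc]
  · rw [Finset.card_erase_of_mem hxF, Finset.card_erase_of_mem hxG, hcard]
  · have hx : x ∈ F ∩ G := Finset.mem_inter.mpr ⟨hxF, hxG⟩
    have : F.erase x ∩ G.erase x = (F ∩ G).erase x := by
      rw [Finset.erase_inter, Finset.inter_erase, Finset.erase_idem]
    rw [this, Finset.card_erase_of_mem hx, Finset.card_erase_of_mem hxF]
    have h1 : 1 ≤ (F ∩ G).card := Finset.card_pos.mpr ⟨x, hx⟩
    omega

lemma adjFacets_insert {f g : Finset V} {x : V} (h : AdjFacets f g)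
    (hxf : x ∉ f) (hxg : x ∉ g) : AdjFacets (insert x f) (insert x g) := by
  obtain ⟨hne, hcard, hint⟩ := h
  refine ⟨fun hc => hne ?_, ?_, ?_⟩
  · have := congrArg (fun s => Finset.erase s x) hc
    simpa [Finset.erase_insert hxf, Finset.erase_insert hxg] using this
  · rw [Finset.card_insert_of_notMem hxf, Finset.card_insert_of_notMem hxg, hcard]
  · have : insert x f ∩ insert x g = insert x (f ∩ g) := by
      ext z; simp only [Finset.mem_inter, Finset.mem_insert]; tauto
    rw [this, Finset.card_insert_of_notMem (fun hc => hxf (Finset.mem_inter.mp hc).1),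
      Finset.card_insert_of_notMem hxf]
    omega

lemma chain'_erase (x : V) :
    ∀ {P : List (Finset V)}, (∀ H ∈ P, x ∈ H) → P.Chain' AdjFacets →
      (P.map (fun H => H.erase x)).Chain' AdjFacets
  | [], _, _ => List.isChain_nil
  | [X], _, _ => List.isChain_singleton _
  | X :: Y :: t, hmem, hch => by
    rw [List.map_cons, List.map_cons, List.Chain', List.isChain_cons_cons]
    have h1 := (List.isChain_cons_cons.mp hch).1
    refine ⟨adjFacets_erase h1 (hmem X (by simp)) (hmem Y (by simp)), ?_⟩
    exact chain'_erase x (fun H hH => hmem H (List.mem_cons_of_mem _ hH))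
      (List.isChain_cons_cons.mp hch).2

lemma chain'_insert (x : V) :
    ∀ {P : List (Finset V)}, (∀ H ∈ P, x ∉ H) → P.Chain' AdjFacets →
      (P.map (insert x)).Chain' AdjFacets
  | [], _, _ => List.isChain_nil
  | [X], _, _ => List.isChain_singleton _
  | X :: Y :: t, hmem, hch => by
    rw [List.map_cons, List.map_cons, List.Chain', List.isChain_cons_cons]
    have h1 := (List.isChain_cons_cons.mp hch).1
    refine ⟨adjFacets_insert h1 (hmem X (by simp)) (hmem Y (by simp)), ?_⟩
    exact chain'_insert x (fun H hH => hmem H (List.mem_cons_of_mem _ hH))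
      (List.isChain_cons_cons.mp hch).2

lemma link_normal {C : Finset (Finset V)} {x : V} (hn : Normal C) :
    Normal (link C x) := by
  intro f A hA B hB hfA hfB
  obtain ⟨A₀, hA₀, hxA, rfl⟩ := mem_link_iff.mp hA
  obtain ⟨B₀, hB₀, hxB, rfl⟩ := mem_link_iff.mp hB
  have hfA' : insert x f ⊆ A₀ := by
    rw [Finset.insert_subset_iff]
    exact ⟨hxA, hfA.trans (Finset.erase_subset x A₀)⟩
  have hfB' : insert x f ⊆ B₀ := by
    rw [Finset.insert_subset_iff]
    exact ⟨hxB, hfB.trans (Finset.erase_subset x B₀)⟩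
  obtain ⟨P, hhead, hlast, hmem, hchain⟩ := hn (insert x f) A₀ hA₀ B₀ hB₀ hfA' hfB'
  refine ⟨P.map (fun H => H.erase x), ?_, ?_, ?_, ?_⟩
  · rw [List.head?_map, hhead]; rfl
  · rw [List.getLast?_map, hlast]; rfl
  · intro h hh
    obtain ⟨H, hH, rfl⟩ := List.mem_map.mp hh
    obtain ⟨hHC, hfH⟩ := hmem H hH
    have hxH : x ∈ H := hfH (Finset.mem_insert_self x f)
    refine ⟨erase_mem_link hHC hxH, ?_⟩
    intro z hz
    refine Finset.mem_erase.mpr ⟨?_, hfH (Finset.mem_insert_of_mem hz)⟩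
    intro hzx
    rw [hzx] at hz
    exact (Finset.notMem_erase x A₀) (hfA hz)
  · exact chain'_erase x (fun H hH => (hmem H hH).2 (Finset.mem_insert_self x f)) hchain

/-! ### lift (map insert) drops -/

lemma drops_map_insert {x w : V} (hne : w ≠ x) :
    ∀ {Q : List (Finset V)}, drops w (Q.map (insert x)) = drops w Q
  | [] => rfl
  | [f] => rfl
  | f :: g :: t => by
    rw [List.map_cons, List.map_cons, drops_cons_cons, drops_cons_cons]
    rw [← List.map_cons]
    rw [drops_map_insert hne]
    congr 1
    by_cases h1 : w ∈ f
    · by_cases h2 : w ∈ g <;> simp [h1, h2, Finset.mem_insert, hne]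
    · simp [h1, Finset.mem_insert, hne]

lemma drops_eq_zero_of_all_mem {w : V} :
    ∀ {P : List (Finset V)}, (∀ X ∈ P, w ∈ X) → drops w P = 0
  | [], _ => rfl
  | [X], _ => rfl
  | X :: Y :: t, h => by
    rw [drops_cons_cons, if_neg (fun hc => hc.2 (h Y (by simp))),
      drops_eq_zero_of_all_mem (fun Z hZ => h Z (List.mem_cons_of_mem _ hZ))]

lemma drops_map_insert_self {x : V} {Q : List (Finset V)} :
    drops x (Q.map (insert x)) = 0 := by
  apply drops_eq_zero_of_all_mem
  intro X hX
  obtain ⟨f, -, rfl⟩ := List.mem_map.mp hX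
  exact Finset.mem_insert_self x f

/-! ### skeleton reachability -/

lemma adj_of_mem_facet {C : Finset (Finset V)} {F : Finset V} {u v : V}
    (hF : F ∈ C) (hu : u ∈ F) (hv : v ∈ F) (hne : u ≠ v) : (skeleton C).Adj u v :=
  ⟨hne, F, hF, hu, hv⟩

lemma reachable_of_mem_facet {C : Finset (Finset V)} {F : Finset V} {u v : V}
    (hF : F ∈ C) (hu : u ∈ F) (hv : v ∈ F) : (skeleton C).Reachable u v := by
  by_cases hne : u = v
  · exact hne ▸ SimpleGraph.Reachable.refl u
  · exact (adj_of_mem_facet hF hu hv hne).reachable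

lemma reachable_along {C : Finset (Finset V)} {k : ℕ} (hk : 2 ≤ k) (hp : Pure C k) :
    ∀ (P : List (Finset V)) (A B : Finset V) (u v : V), (∀ X ∈ P, X ∈ C) →
      P.Chain' AdjFacets → P.head? = some A → P.getLast? = some B →
      u ∈ A → v ∈ B → (skeleton C).Reachable u v
  | [], _, _, _, _, _, _, h, _, _, _ => by simp at h
  | [X], A, B, u, v, hmem, _, hA, hB, hu, hv => by
    simp only [List.head?_cons, Option.some_inj] at hA
    simp only [List.getLast?_singleton, Option.some_inj] at hB
    subst hA; subst hB
    exact reachable_of_mem_facet (hmem X (by simp)) hu hv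
  | X :: Y :: t, A, B, u, v, hmem, hch, hA, hB, hu, hv => by
    simp only [List.head?_cons, Option.some_inj] at hA
    subst hA
    have h1 : AdjFacets X Y := (List.isChain_cons_cons.mp hch).1
    have hcard : 1 ≤ (X ∩ Y).card := by
      have h2 := h1.2.2
      have h3 : X.card = k := hp X (hmem X (by simp))
      omega
    obtain ⟨z, hz⟩ := Finset.card_pos.mp hcard
    have hzA : z ∈ X := (Finset.mem_inter.mp hz).1
    have hzY : z ∈ Y := (Finset.mem_inter.mp hz).2
    have hB' : (Y :: t).getLast? = some B := by rw [← hB]; simp [List.getLast?_cons_cons]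
    exact (reachable_of_mem_facet (hmem X (by simp)) hu hzA).trans
      (reachable_along hk hp (Y :: t) Y B z v (fun Z hZ => hmem Z (List.mem_cons_of_mem _ hZ))
        (List.isChain_cons_cons.mp hch).2 rfl hB' hzY hv)

lemma reachable_facets {C : Finset (Finset V)} {k : ℕ} (hk : 2 ≤ k)
    (hnormal : Normal C) (hp : Pure C k) {F G : Finset V} (hF : F ∈ C) (hG : G ∈ C)
    {u v : V} (hu : u ∈ F) (hv : v ∈ G) : (skeleton C).Reachable u v := by
  obtain ⟨P, hhead, hlast, hmem, hchain⟩ :=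
    hnormal ∅ F hF G hG (Finset.empty_subset F) (Finset.empty_subset G)
  exact reachable_along hk hp P F G u v (fun X hX => (hmem X hX).1) hchain hhead hlast hu hv

/-! ### lev -/

def lev (C : Finset (Finset V)) (S : Finset V) (w : V) : ℕ∞ :=
  S.inf fun s => (skeleton C).edist w s

lemma lev_le {C : Finset (Finset V)} {S : Finset V} {w s : V} (hs : s ∈ S) :
    lev C S w ≤ (skeleton C).edist w s :=
  Finset.inf_le hs

lemma lev_eq_zero_of_mem {C : Finset (Finset V)} {S : Finset V} {w : V} (hw : w ∈ S) :
    lev C S w = 0 :=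
  le_antisymm (by simpa [SimpleGraph.edist_self] using lev_le (C := C) (w := w) hw) (zero_le)

lemma lev_attained {C : Finset (Finset V)} {S : Finset V} {w : V}
    (h : lev C S w ≠ ⊤) : ∃ s ∈ S, (skeleton C).edist w s = lev C S w := by
  have hS : S.Nonempty := by
    rcases S.eq_empty_or_nonempty with rfl | hS
    · simp [lev] at h
    · exact hS
  obtain ⟨s, hs, hval⟩ := Finset.exists_mem_eq_inf S hS fun s => (skeleton C).edist w s
  exact ⟨s, hs, hval.symm⟩

lemma mem_of_lev_eq_zero {C : Finset (Finset V)} {S : Finset V} {w : V}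
    (h : lev C S w = 0) : w ∈ S := by
  obtain ⟨s, hs, hval⟩ := lev_attained (C := C) (S := S) (w := w) (by rw [h]; simp)
  rw [h] at hval
  rwa [SimpleGraph.edist_eq_zero_iff.mp hval]

lemma lev_lipschitz {C : Finset (Finset V)} {S : Finset V} {u v : V}
    (hadj : (skeleton C).Adj u v) : lev C S u ≤ lev C S v + 1 := by
  rcases eq_or_ne (lev C S v) ⊤ with h | h
  · rw [h]; simp
  obtain ⟨s, hs, hval⟩ := lev_attained h
  calc lev C S u ≤ (skeleton C).edist u s := lev_le hs
    _ ≤ (skeleton C).edist u v + (skeleton C).edist v s := SimpleGraph.edist_triangle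
    _ ≤ 1 + lev C S v := by
        rw [hval]
        gcongr
        exact le_of_eq (SimpleGraph.edist_eq_one_iff_adj.mpr hadj)
    _ = lev C S v + 1 := by rw [add_comm]

lemma exists_adj_lev {C : Finset (Finset V)} {S : Finset V} {x : V} {L : ℕ}
    (h : lev C S x = (L + 1 : ℕ)) : ∃ y, (skeleton C).Adj x y ∧ lev C S y = (L : ℕ) := by
  obtain ⟨s, hs, hval⟩ := lev_attained (C := C) (S := S) (w := x)
    (by rw [h]; exact ENat.coe_ne_top _)
  rw [h] at hval
  obtain ⟨p, hp⟩ := SimpleGraph.exists_walk_of_edist_eq_coe hval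
  cases p with
  | nil => simp at hp
  | cons hadj q =>
    rename_i y
    refine ⟨y, hadj, le_antisymm ?_ ?_⟩
    · calc lev C S y ≤ (skeleton C).edist y s := lev_le hs
        _ ≤ (q.length : ℕ∞) := SimpleGraph.edist_le q
        _ = (L : ℕ∞) := by
            have hq : q.length = L := by
              simp only [SimpleGraph.Walk.length_cons] at hp
              omega
            exact_mod_cast congrArg (Nat.cast : ℕ → ℕ∞) hq
    · by_contra hc
      push_neg at hc
      have h2 := lev_lipschitz (C := C) (S := S) hadj
      rw [h] at h2
      have htop : lev C S y ≠ ⊤ := (hc.trans_le le_top).ne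
      lift (lev C S y) to ℕ using htop with M hM
      have hML : M < L := by exact_mod_cast hc
      have hh : L + 1 ≤ M + 1 := by exact_mod_cast h2
      omega

/-! ### more list helpers -/

lemma mem_of_getLast? {α : Type*} {l : List α} {a : α} (h : l.getLast? = some a) :
    a ∈ l := by
  have hmem : a ∈ l.getLast? := by rw [h]; rfl
  obtain ⟨h', rfl⟩ := List.mem_getLast?_eq_getLast hmem
  exact List.getLast_mem h'

lemma getLast?_cons_of_ne_nil {α : Type*} {l : List α} (hl : l ≠ []) (a : α) :
    (a :: l).getLast? = l.getLast? := by
  cases l with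
  | nil => exact absurd rfl hl
  | cons b t => exact List.getLast?_cons_cons

lemma eq_head_or_mem_tail {α : Type*} {l : List α} {a x : α}
    (hh : l.head? = some a) (hx : x ∈ l) : x = a ∨ x ∈ l.tail := by
  cases l with
  | nil => simp at hx
  | cons b t =>
    simp only [List.head?_cons, Option.some_inj] at hh
    subst hh
    rcases List.mem_cons.mp hx with h | h
    · exact Or.inl h
    · exact Or.inr h

lemma drops_eq_zero_of_olm {S : Finset V} {w : V} (hw : w ∈ S) :
    ∀ {P : List (Finset V)}, (∀ X ∈ P.dropLast, X ∩ S = ∅) → drops w P = 0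
  | [], _ => rfl
  | [X], _ => rfl
  | X :: Y :: t, holm => by
    have hX : X ∩ S = ∅ := holm X (by rw [List.dropLast_cons₂]; simp)
    have hwX : w ∉ X := fun hc => by
      have : w ∈ X ∩ S := Finset.mem_inter.mpr ⟨hc, hw⟩
      simp [hX] at this
    rw [drops_cons_cons, if_neg (fun hc => hwX hc.1),
      drops_eq_zero_of_olm hw (fun Z hZ => holm Z (by rw [List.dropLast_cons₂]; exact List.mem_cons_of_mem _ hZ))]

lemma enat_le_of_add_one_le_add_one {a b : ℕ∞} (h : a + 1 ≤ b + 1) : a ≤ b := by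
  rcases eq_or_ne b ⊤ with rfl | hb
  · exact le_top
  rcases eq_or_ne a ⊤ with rfl | ha
  · exfalso
    lift b to ℕ using hb
    have : (⊤ : ℕ∞) ≤ (b : ℕ∞) + 1 := by simpa using h
    rw [top_le_iff] at this
    have hb1 : ((b + 1 : ℕ) : ℕ∞) = ⊤ := by push_cast; exact this
    exact ENat.coe_ne_top _ hb1
  lift a to ℕ using ha
  lift b to ℕ using hb
  have : a + 1 ≤ b + 1 := by exact_mod_cast h
  exact_mod_cast (by omega : a ≤ b)

theorem master :
    ∀ k : ℕ, 2 ≤ k → ∀ (C : Finset (Finset V)) (S F : Finset V),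
      Normal C → Pure C k → F ∈ C → (∃ H ∈ C, (H ∩ S).Nonempty) →
      ∃ P : List (Finset V), P ≠ [] ∧ P.head? = some F ∧ (∀ X ∈ P, X ∈ C) ∧
        P.Chain' AdjFacets ∧ (∀ X ∈ P.dropLast, X ∩ S = ∅) ∧
        (∃ H, P.getLast? = some H ∧ (H ∩ S).Nonempty) ∧
        (∀ w, lev C S w = 1 → drops w P ≤ 2 ^ (k - 3)) ∧
        (∀ w, drops w P ≤ 2 ^ (k - 2)) ∧
        (k = 2 → ∀ H, P.getLast? = some H → ∀ w ∈ H, drops w P = 0) := by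
  intro k
  induction k using Nat.strong_induction_on with
  | _ k IHk =>
  intro hk C S F hnormal hpure hF hmeet
  have hlevfin : ∀ G ∈ C, ∀ x ∈ G, lev C S x ≠ ⊤ := by
    intro G hG x hx
    obtain ⟨H, hH, s, hs⟩ := hmeet
    have hreach := reachable_facets hk hnormal hpure hG hH hx (Finset.mem_inter.mp hs).1
    have hle : lev C S x ≤ (skeleton C).edist x s := lev_le (Finset.mem_inter.mp hs).2
    intro hc
    rw [hc, top_le_iff] at hle
    exact (SimpleGraph.edist_ne_top_iff_reachable.mpr hreach) hle
  rcases eq_or_lt_of_le hk with hk2 | hk3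
  · -- base case : k = 2
    subst hk2
    have key2 : ∀ L : ℕ, ∀ F' ∈ C, ∀ x ∈ F', lev C S x = (L : ℕ∞) →
        (∀ u ∈ F', lev C S x ≤ lev C S u) →
        ∃ P : List (Finset V), P ≠ [] ∧ P.head? = some F' ∧ (∀ X ∈ P, X ∈ C) ∧
          P.Chain' AdjFacets ∧ (∀ X ∈ P.dropLast, X ∩ S = ∅) ∧
          (∃ H, P.getLast? = some H ∧ (H ∩ S).Nonempty) ∧
          (∀ X ∈ P.tail, ∀ w ∈ X, w = x ∨ lev C S w < (L : ℕ∞)) ∧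
          (∀ w, drops w P ≤ 1) ∧
          (∀ H, P.getLast? = some H → ∀ w ∈ H, drops w P = 0) := by
      intro L
      induction L with
      | zero =>
        intro F' hF' x hx hlev _
        refine ⟨[F'], by simp, rfl, by simpa using hF', List.isChain_singleton _, by simp, ?_, by simp,
          fun w => by simp [drops_single], fun H hH w _ => by simp [drops_single]⟩
        exact ⟨F', rfl, x, Finset.mem_inter.mpr ⟨hx, mem_of_lev_eq_zero (by exact_mod_cast hlev)⟩⟩
      | succ L IHL =>
        intro F' hF' x hx hlev hmin
        obtain ⟨y, hadj, hlevy⟩ := exists_adj_lev (C := C) (S := S) (x := x) (by exact_mod_cast hlev)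
        obtain ⟨hxy, F₀, hF₀, hxF₀, hyF₀⟩ := hadj
        have hcards : F₀.card = 2 := hpure F₀ hF₀
        have hsub : {x, y} ⊆ F₀ := by
          intro z hz
          rcases Finset.mem_insert.mp hz with rfl | hz
          · exact hxF₀
          · rwa [Finset.mem_singleton.mp hz]
        have hpair : ({x, y} : Finset V).card = 2 := Finset.card_pair hxy
        have hF₀eq : F₀ = {x, y} :=
          (Finset.eq_of_subset_of_card_le hsub (le_of_eq (hcards.trans hpair.symm))).symm
        have hyx : y ≠ x := fun h => hxy h.symm
        obtain ⟨P', hne', hhead', hmem', hchain', holm1', holm2', hv6', hdrops', hlast0'⟩ :=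
          IHL F₀ hF₀ y hyF₀ hlevy (by
            intro u hu
            rw [hF₀eq] at hu
            rcases Finset.mem_insert.mp hu with rfl | hu
            · rw [hlev, hlevy]
              exact_mod_cast Nat.le_succ L
            · rw [Finset.mem_singleton.mp hu])
        have hLlt : (L : ℕ∞) < ((L + 1 : ℕ) : ℕ∞) := by exact_mod_cast Nat.lt_succ_self L
        by_cases hFF : F' = F₀
        · subst hFF
          refine ⟨P', hne', hhead', hmem', hchain', holm1', holm2', ?_, hdrops', hlast0'⟩
          intro X hX w hw
          rcases hv6' X hX w hw with rfl | hlt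
          · right
            rw [hlevy]; exact hLlt
          · exact Or.inr (hlt.trans hLlt)
        · -- F' ≠ F₀ : prepend F'
          have hinter : F' ∩ F₀ = {x} := by
            apply Finset.Subset.antisymm
            · intro u hu
              obtain ⟨huF, huF₀⟩ := Finset.mem_inter.mp hu
              rw [hF₀eq] at huF₀
              rcases Finset.mem_insert.mp huF₀ with rfl | huy
              · exact Finset.mem_singleton_self u
              · exfalso
                rw [Finset.mem_singleton.mp huy] at huF
                apply hFF
                have hsub' : {x, y} ⊆ F' := by
                  intro z hz
                  rcases Finset.mem_insert.mp hz with rfl | hz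
                  · exact hx
                  · rwa [Finset.mem_singleton.mp hz]
                rw [hF₀eq]
                exact Finset.eq_of_subset_of_card_le hsub'
                  (le_of_eq ((hpure F' hF').trans hpair.symm)) |>.symm
            · intro u hu
              rw [Finset.mem_singleton.mp hu]
              exact Finset.mem_inter.mpr ⟨hx, hxF₀⟩
          have hadjF : AdjFacets F' F₀ := by
            refine ⟨hFF, (hpure F' hF').trans (hpure F₀ hF₀).symm, ?_⟩
            rw [hinter, Finset.card_singleton, hpure F' hF']
          have hxnotF₀ : ∀ w ∈ F', w ∉ F₀ → w ∉ F₀ := fun w _ h => h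
          -- w ∈ F' \ F₀ never appears in P'
          have hnotinP' : ∀ w, w ∈ F' → w ∉ F₀ → ∀ X ∈ P', w ∉ X := by
            intro w hwF' hwF₀ X hX hwX
            rcases eq_head_or_mem_tail hhead' hX with rfl | hXt
            · exact hwF₀ hwX
            · rcases hv6' X hXt w hwX with rfl | hlt
              · exact hwF₀ hyF₀
              · have := hmin w hwF'
                rw [hlev] at this
                have : ((L + 1 : ℕ) : ℕ∞) < (L : ℕ∞) := lt_of_le_of_lt this hlt
                have h2 : (L : ℕ∞) < ((L + 1 : ℕ) : ℕ∞) := hLlt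
                exact absurd this (not_lt.mpr h2.le)
          have hdropsP : ∀ w, drops w (F' :: P') =
              (if w ∈ F' ∧ w ∉ F₀ then 1 else 0) + drops w P' := by
            intro w
            cases P' with
            | nil => exact absurd rfl hne'
            | cons A t =>
              simp only [List.head?_cons, Option.some_inj] at hhead'
              rw [← hhead']
              exact drops_cons_cons w F' A t
          refine ⟨F' :: P', by simp, rfl, ?_, ?_, ?_, ?_, ?_, ?_, ?_⟩
          · intro X hX
            rcases List.mem_cons.mp hX with rfl | hX
            · exact hF'
            · exact hmem' X hX
          · rw [List.Chain', List.isChain_cons]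
            refine ⟨fun Y hY => ?_, hchain'⟩
            rw [hhead'] at hY
            cases hY
            exact hadjF
          · intro X hX
            rw [List.dropLast_cons_of_ne_nil hne'] at hX
            rcases List.mem_cons.mp hX with rfl | hX
            · -- F' ∩ S = ∅
              rw [Finset.eq_empty_iff_forall_notMem]
              intro u hu
              obtain ⟨huF, huS⟩ := Finset.mem_inter.mp hu
              have h0 : lev C S u = 0 := lev_eq_zero_of_mem huS
              have := hmin u huF
              rw [hlev, h0] at this
              exact absurd this (by exact_mod_cast Nat.not_succ_le_zero L)
            · exact holm1' X hX
          · obtain ⟨H, hH, hHS⟩ := holm2'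
            exact ⟨H, by rw [getLast?_cons_of_ne_nil hne' F'] ; exact hH, hHS⟩
          · -- (v₆)
            intro X hX w hw
            rcases eq_head_or_mem_tail hhead' (show X ∈ P' from hX) with rfl | hXt
            · rw [hF₀eq] at hw
              rcases Finset.mem_insert.mp hw with rfl | hw
              · exact Or.inl rfl
              · right
                rw [Finset.mem_singleton.mp hw, hlevy]
                exact hLlt
            · rcases hv6' X hXt w hw with rfl | hlt
              · right; rw [hlevy]; exact hLlt
              · exact Or.inr (hlt.trans hLlt)
          · -- drops ≤ 1
            intro w
            rw [hdropsP w]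
            by_cases hcase : w ∈ F' ∧ w ∉ F₀
            · rw [if_pos hcase,
                drops_eq_zero_of_not_mem (fun X hX => hnotinP' w hcase.1 hcase.2 X hX)]
            · rw [if_neg hcase, zero_add]
              exact hdrops' w
          · -- last facet drops zero
            intro H hH w hwH
            rw [hdropsP w]
            have hHP' : H ∈ P' := by
              apply mem_of_getLast?
              rw [← getLast?_cons_of_ne_nil hne' F']
              exact hH
            have hlast' : P'.getLast? = some H := by
              rw [← getLast?_cons_of_ne_nil hne' F']
              exact hH
            rw [hlast0' H hlast' w hwH]
            rw [if_neg (fun hc => hnotinP' w hc.1 hc.2 H hHP' hwH)]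
    -- wrap up base case
    obtain ⟨x, hxF, hxmin⟩ := Finset.exists_min_image F (lev C S) (Finset.card_pos.mp (by rw [hpure F hF]; omega))
    have hfin := hlevfin F hF x hxF
    lift (lev C S x) to ℕ using hfin with L hL
    obtain ⟨P, hne, hhead, hmem, hchain, holm1, holm2, _, hdrops, hlast0⟩ :=
      key2 L F hF x hxF hL.symm (by rw [← hL]; exact hxmin)
    refine ⟨P, hne, hhead, hmem, hchain, holm1, holm2, ?_, ?_, fun _ => hlast0⟩
    · intro w _; simpa using hdrops w
    · intro w; simpa using hdrops w
  · -- step case : 3 ≤ k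
    have hk3' : 3 ≤ k := hk3
    have hexp : k - 1 - 2 = k - 3 := by omega
    have hpowsum : 2 ^ (k - 3) + 2 ^ (k - 3) = 2 ^ (k - 2) := by
      rw [show k - 2 = (k - 3) + 1 by omega, pow_succ]
      ring
    have hxverts : ∀ x : V, x ∉ verts (link C x) := by
      intro x h
      exact (skeleton C).loopless.irrefl x (adj_of_mem_verts_link h)
    have key : ∀ L : ℕ, ∀ F' ∈ C, ∀ x ∈ F', lev C S x = (L : ℕ∞) →
        ∃ P : List (Finset V), P ≠ [] ∧ P.head? = some F' ∧ (∀ X ∈ P, X ∈ C) ∧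
          P.Chain' AdjFacets ∧ (∀ X ∈ P.dropLast, X ∩ S = ∅) ∧
          (∃ H, P.getLast? = some H ∧ (H ∩ S).Nonempty) ∧
          (∀ X ∈ P, ∀ w ∈ X, lev C S w ≤ (L : ℕ∞) + 1) ∧
          (∀ w, lev C S w = 1 → drops w P ≤ 2 ^ (k - 3)) ∧
          (∀ w, lev C S w = (L : ℕ∞) + 1 → drops w P ≤ 2 ^ (k - 3)) ∧
          (∀ w, drops w P ≤ 2 ^ (k - 2)) ∧
          (L = 0 → ∀ w, drops w P = 0) := by
      intro L
      induction L with
      | zero =>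
        intro F' hF' x hx hlev
        refine ⟨[F'], by simp, rfl, by simpa using hF', List.isChain_singleton _, by simp,
          ⟨F', rfl, x, Finset.mem_inter.mpr ⟨hx, mem_of_lev_eq_zero (by exact_mod_cast hlev)⟩⟩,
          ?_, fun w _ => by simp [drops_single], fun w _ => by simp [drops_single],
          fun w => by simp [drops_single], fun _ w => drops_single w F'⟩
        intro X hX w hw
        rcases List.mem_singleton.mp hX with rfl
        by_cases hwx : w = x
        · subst hwx
          rw [hlev]
          simp
        · have hadj := adj_of_mem_facet hF' hw hx hwx
          have hlip := lev_lipschitz (C := C) (S := S) hadj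
          rw [hlev] at hlip
          simpa using hlip
      | succ L IHL =>
        intro F' hF' x hx hlev
        have hlev' : lev C S x = (L : ℕ∞) + 1 := by rw [hlev]; push_cast; ring
        obtain ⟨y, hadj, hlevy⟩ := exists_adj_lev (C := C) (S := S) (x := x)
          (by exact_mod_cast hlev)
        obtain ⟨hxy, F₀, hF₀, hxF₀, hyF₀⟩ := hadj
        set T : Finset V := (verts (link C x)).filter (fun w => lev C S w = (L : ℕ∞)) with hTdef
        have hmemT : ∀ w, w ∈ T ↔ w ∈ verts (link C x) ∧ lev C S w = (L : ℕ∞) :=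
          fun w => Finset.mem_filter
        have hyT : y ∈ T := by
          rw [hmemT]
          exact ⟨mem_verts_of_mem_facet (erase_mem_link hF₀ hxF₀)
            (Finset.mem_erase.mpr ⟨Ne.symm hxy, hyF₀⟩), hlevy⟩
        -- range of lev on verts of the link
        have hlev_link : ∀ w ∈ verts (link C x),
            (L : ℕ∞) ≤ lev C S w ∧ lev C S w ≤ (L : ℕ∞) + 1 + 1 := by
          intro w hwv
          have hadjxw := adj_of_mem_verts_link hwv
          constructor
          · have hlip := lev_lipschitz (C := C) (S := S) hadjxw
            rw [hlev'] at hlip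
            exact enat_le_of_add_one_le_add_one hlip
          · have hlip := lev_lipschitz (C := C) (S := S) hadjxw.symm
            rw [hlev'] at hlip
            exact hlip
        -- apply the master induction hypothesis in the link
        obtain ⟨Q₁, hne₁, hhead₁, hmem₁, hchain₁, holm1₁, holm2₁, _, hdrops₁, _⟩ :=
          IHk (k - 1) (by omega) (by omega) (link C x) T (F'.erase x)
            (link_normal hnormal) (link_pure hpure) (erase_mem_link hF' hx)
            ⟨F₀.erase x, erase_mem_link hF₀ hxF₀, y,
              Finset.mem_inter.mpr ⟨Finset.mem_erase.mpr ⟨Ne.symm hxy, hyF₀⟩, hyT⟩⟩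
        have hdQ : ∀ w, drops w Q₁ ≤ 2 ^ (k - 3) := by
          intro w
          have := hdrops₁ w
          rwa [hexp] at this
        obtain ⟨f₁, hlastQ₁, hf₁T⟩ := holm2₁
        have hxnot : ∀ f ∈ Q₁, x ∉ f := fun f hf => not_mem_of_mem_link (hmem₁ f hf)
        set P₁ : List (Finset V) := Q₁.map (insert x) with hP₁def
        have hne₁' : P₁ ≠ [] := by
          rw [hP₁def]
          simpa using hne₁
        have hheadP₁ : P₁.head? = some F' := by
          rw [hP₁def, List.head?_map, hhead₁]
          simp [Finset.insert_erase hx]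
        have hlastP₁ : P₁.getLast? = some (insert x f₁) := by
          rw [hP₁def, List.getLast?_map, hlastQ₁]
          rfl
        have hmemP₁ : ∀ X ∈ P₁, X ∈ C := by
          intro X hX
          obtain ⟨f, hf, rfl⟩ := List.mem_map.mp hX
          exact insert_mem_of_mem_link (hmem₁ f hf)
        have hchainP₁ : P₁.Chain' AdjFacets := chain'_insert x hxnot hchain₁
        have hmemvertP₁ : ∀ X ∈ P₁, ∀ w ∈ X, w = x ∨ w ∈ verts (link C x) := by
          intro X hX w hw
          obtain ⟨f, hf, rfl⟩ := List.mem_map.mp hX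
          rcases Finset.mem_insert.mp hw with rfl | hwf
          · exact Or.inl rfl
          · exact Or.inr (mem_verts_of_mem_facet (hmem₁ f hf) hwf)
        -- anchor for the tail
        obtain ⟨y', hy'⟩ := hf₁T
        have hy'f₁ : y' ∈ f₁ := (Finset.mem_inter.mp hy').1
        have hy'T : y' ∈ T := (Finset.mem_inter.mp hy').2
        have hy'lev : lev C S y' = (L : ℕ∞) := ((hmemT y').mp hy'T).2
        have hf₁link : f₁ ∈ link C x := hmem₁ f₁ (mem_of_getLast? hlastQ₁)
        have hH₁C : insert x f₁ ∈ C := insert_mem_of_mem_link hf₁link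
        obtain ⟨P₂, hne₂, hhead₂, hmem₂, hchain₂, holm1₂, holm2₂, hv₂, hii₂, hiv₂, hiii₂, h0₂⟩ :=
          IHL (insert x f₁) hH₁C y' (Finset.mem_insert_of_mem hy'f₁) hy'lev
        -- glue
        have hjunc2 : P₂.head? = some (insert x f₁) := hhead₂
        have hdropsglue : ∀ w, drops w (glue P₁ P₂) = drops w P₁ + drops w P₂ :=
          fun w => glue_drops hlastP₁ hjunc2
        have hdropsP₁x : drops x P₁ = 0 := drops_map_insert_self
        have hdropsP₁ : ∀ w, w ≠ x → drops w P₁ = drops w Q₁ :=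
          fun w hw => drops_map_insert hw
        have hTzero : ∀ w ∈ T, drops w P₁ = 0 := by
          intro w hwT
          have hwv : w ∈ verts (link C x) := ((hmemT w).mp hwT).1
          have hwx : w ≠ x := fun hc => hxverts x (hc ▸ hwv)
          rw [hdropsP₁ w hwx]
          exact drops_eq_zero_of_olm hwT holm1₁
        have hnotmemP₁ : ∀ w, w ≠ x → w ∉ verts (link C x) → drops w P₁ = 0 := by
          intro w hwx hwv
          apply drops_eq_zero_of_not_mem
          intro X hX hwX
          rcases hmemvertP₁ X hX w hwX with rfl | h
          · exact hwx rfl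
          · exact hwv h
        have hcast2 : ((L + 2 : ℕ) : ℕ∞) = (L : ℕ∞) + 1 + 1 := by push_cast; ring
        have hcast1 : ((L + 1 : ℕ) : ℕ∞) = (L : ℕ∞) + 1 := by push_cast; ring
        have hP₂zero_of_high : ∀ w, lev C S w = (L : ℕ∞) + 1 + 1 → drops w P₂ = 0 := by
          intro w hw
          apply drops_eq_zero_of_not_mem
          intro X hX hwX
          have hle := hv₂ X hX w hwX
          rw [hw] at hle
          have h1 : ((L + 2 : ℕ) : ℕ∞) ≤ ((L + 1 : ℕ) : ℕ∞) := by
            rw [hcast2, hcast1]; exact hle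
          have : L + 2 ≤ L + 1 := by exact_mod_cast h1
          omega
        refine ⟨glue P₁ P₂, glue_ne_nil hne₁', ?_, ?_, ?_, ?_, ?_, ?_, ?_, ?_, ?_, ?_⟩
        · rw [glue_head? hne₁']
          exact hheadP₁
        · intro X hX
          rcases glue_mem hX with h | h
          · exact hmemP₁ X h
          · exact hmem₂ X h
        · exact glue_chain' hlastP₁ hjunc2 hchainP₁ hchain₂
        · -- olm1
          intro X hX
          rcases glue_dropLast_mem hlastP₁ hjunc2 hX with h | h
          · -- X in dropLast P₁
            have hmapdl : P₁.dropLast = Q₁.dropLast.map (insert x) := by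
              rw [hP₁def, List.map_dropLast]
            rw [hmapdl] at h
            obtain ⟨f, hf, rfl⟩ := List.mem_map.mp h
            have hfQ₁ : f ∈ Q₁ := List.dropLast_subset _ hf
            have hfT : f ∩ T = ∅ := holm1₁ f hf
            rw [Finset.eq_empty_iff_forall_notMem]
            intro u hu
            obtain ⟨huX, huS⟩ := Finset.mem_inter.mp hu
            have hu0 : lev C S u = 0 := lev_eq_zero_of_mem huS
            rcases Finset.mem_insert.mp huX with rfl | huf
            · rw [hlev] at hu0
              have : L + 1 = 0 := by exact_mod_cast hu0
              omega
            · have huv : u ∈ verts (link C x) := mem_verts_of_mem_facet (hmem₁ f hfQ₁) huf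
              have hrange := (hlev_link u huv).1
              rw [hu0] at hrange
              have hL0 : L = 0 := by
                have : (L : ℕ∞) = 0 := le_antisymm hrange (zero_le)
                exact_mod_cast this
              have huT : u ∈ T := by
                rw [hmemT]
                exact ⟨huv, by rw [hu0, hL0]; simp⟩
              have : u ∈ f ∩ T := Finset.mem_inter.mpr ⟨huf, huT⟩
              rw [hfT] at this
              simp at this
          · exact holm1₂ X h
        · -- olm2
          obtain ⟨H₂, hH₂, hH₂S⟩ := holm2₂
          exact ⟨H₂, by rw [glue_getLast? hne₁' hlastP₁ hjunc2]; exact hH₂, hH₂S⟩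
        · -- (v)
          intro X hX w hw
          rcases glue_mem hX with h | h
          · rcases hmemvertP₁ X h w hw with rfl | hwv
            · rw [hlev']
              push_cast
              calc (L : ℕ∞) + 1 ≤ (L : ℕ∞) + 1 + 1 := le_self_add
                _ = (L : ℕ∞) + 1 + 1 := rfl
            · have := (hlev_link w hwv).2
              calc lev C S w ≤ (L : ℕ∞) + 1 + 1 := this
                _ = ((L + 1 : ℕ) : ℕ∞) + 1 := by push_cast; ring
          · calc lev C S w ≤ (L : ℕ∞) + 1 := hv₂ X h w hw
              _ ≤ ((L + 1 : ℕ) : ℕ∞) + 1 := by push_cast; exact le_self_add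
        · -- (ii) : lev w = 1
          intro w hw1
          rw [hdropsglue w]
          have hd2 : drops w P₂ ≤ 2 ^ (k - 3) := hii₂ w hw1
          by_cases hwx : w = x
          · rw [hwx, hdropsP₁x, zero_add]
            exact hwx ▸ hd2
          by_cases hwv : w ∈ verts (link C x)
          · have hrange := (hlev_link w hwv).1
            rw [hw1] at hrange
            have hL1 : L ≤ 1 := by exact_mod_cast hrange
            rcases (by omega : L = 0 ∨ L = 1) with hL0 | hL1'
            · have hd2' : drops w P₂ = 0 := h0₂ hL0 w
              rw [hd2', add_zero, hdropsP₁ w hwx]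
              exact hdQ w
            · have hwT : w ∈ T := by
                rw [hTdef, Finset.mem_filter]
                refine ⟨hwv, ?_⟩
                rw [hw1, hL1']
                simp
              rw [hTzero w hwT, zero_add]
              exact hd2
          · rw [hnotmemP₁ w hwx hwv, zero_add]
            exact hd2
        · -- (iv) : lev w = (L+1)+1
          intro w hw
          rw [hdropsglue w]
          have hw' : lev C S w = (L : ℕ∞) + 1 + 1 := by
            rw [hw]; push_cast; ring
          have hd2 : drops w P₂ = 0 := hP₂zero_of_high w hw'
          rw [hd2, add_zero]
          by_cases hwx : w = x
          · rw [hwx, hdropsP₁x]; exact Nat.zero_le _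
          · rw [hdropsP₁ w hwx]
            exact hdQ w
        · -- (iii)
          intro w
          rw [hdropsglue w]
          by_cases hwx : w = x
          · rw [hwx, hdropsP₁x, zero_add]
            exact hwx ▸ hiii₂ w
          by_cases hwv : w ∈ verts (link C x)
          · obtain ⟨hlow, hup⟩ := hlev_link w hwv
            have hwtop : lev C S w ≠ ⊤ := by
              intro hc
              rw [hc, top_le_iff] at hup
              rw [← hcast2] at hup
              exact ENat.coe_ne_top _ hup
            lift (lev C S w) to ℕ using hwtop with M hM
            have hLM : L ≤ M := by exact_mod_cast hlow
            have hML : M ≤ L + 2 := by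
              have : ((M : ℕ) : ℕ∞) ≤ ((L + 2 : ℕ) : ℕ∞) := by push_cast; exact hup
              exact_mod_cast this
            rcases (by omega : M = L ∨ M = L + 1 ∨ M = L + 2) with hMe | hMe | hMe
            · have hwT : w ∈ T := by
                rw [hmemT]
                exact ⟨hwv, by rw [← hM, hMe]⟩
              rw [hTzero w hwT, zero_add]
              exact hiii₂ w
            · have hd1 : drops w P₁ ≤ 2 ^ (k - 3) := by
                rw [hdropsP₁ w hwx]; exact hdQ w
              have hd2 : drops w P₂ ≤ 2 ^ (k - 3) := by
                apply hiv₂ w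
                rw [← hM, hMe]
                push_cast
                ring
              calc drops w P₁ + drops w P₂ ≤ 2 ^ (k - 3) + 2 ^ (k - 3) := add_le_add hd1 hd2
                _ = 2 ^ (k - 2) := hpowsum
            · have hd2 : drops w P₂ = 0 := by
                apply hP₂zero_of_high w
                rw [← hM, hMe]
                push_cast
                ring
              rw [hd2, add_zero]
              calc drops w P₁ ≤ 2 ^ (k - 3) := by rw [hdropsP₁ w hwx]; exact hdQ w
                _ ≤ 2 ^ (k - 2) := Nat.pow_le_pow_right (by omega) (by omega)
          · rw [hnotmemP₁ w hwx hwv, zero_add]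
            exact hiii₂ w
        · -- (0)
          intro h
          exact absurd h (Nat.succ_ne_zero L)
    -- wrap up the step case
    obtain ⟨x, hxF⟩ := Finset.card_pos.mp (by rw [hpure F hF]; omega : 0 < F.card)
    have hfin := hlevfin F hF x hxF
    lift (lev C S x) to ℕ using hfin with L hL
    obtain ⟨P, hne, hhead, hmem, hchain, holm1, holm2, _, hii, _, hiii, _⟩ :=
      key L F hF x hxF hL.symm
    exact ⟨P, hne, hhead, hmem, hchain, holm1, holm2, hii, hiii, fun h => absurd h (by omega)⟩

theorem btheorem :
    ∀ k : ℕ, 2 ≤ k → ∀ (C : Finset (Finset V)) (F G : Finset V),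
      Normal C → Pure C k → F ∈ C → G ∈ C →
      ∃ P : List (Finset V), P ≠ [] ∧ P.head? = some F ∧ P.getLast? = some G ∧
        (∀ X ∈ P, X ∈ C) ∧ P.Chain' AdjFacets ∧ (∀ w, drops w P ≤ 2 ^ (k - 2)) := by
  intro k
  induction k using Nat.strong_induction_on with
  | _ k IHk =>
  intro hk C F G hnormal hpure hF hG
  have hGmeet : ∃ H ∈ C, (H ∩ G).Nonempty := by
    refine ⟨G, hG, ?_⟩
    rw [Finset.inter_self]
    exact Finset.card_pos.mp (by rw [hpure G hG]; omega)
  rcases eq_or_lt_of_le hk with hk2 | hk3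
  · -- base case k = 2
    subst hk2
    by_cases hFG : F = G
    · exact ⟨[F], by simp, rfl, by rw [hFG]; rfl, by simpa using hF, List.isChain_singleton _,
        fun w => by simp [drops_single]⟩
    obtain ⟨P₁, hne, hhead, hmem, hchain, holm1, holm2, _, hdrops, hlast0⟩ :=
      master 2 le_rfl C G F hnormal hpure hF hGmeet
    obtain ⟨H, hHlast, hHG⟩ := holm2
    obtain ⟨x₀, hx₀⟩ := hHG
    have hx₀H : x₀ ∈ H := (Finset.mem_inter.mp hx₀).1
    have hx₀G : x₀ ∈ G := (Finset.mem_inter.mp hx₀).2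
    have hHC : H ∈ C := hmem H (mem_of_getLast? hHlast)
    by_cases hHG' : H = G
    · exact ⟨P₁, hne, hhead, by rw [hHlast, hHG'], hmem, hchain,
        fun w => by simpa using hdrops w⟩
    · have hadjHG : AdjFacets H G := by
        refine ⟨hHG', (hpure H hHC).trans (hpure G hG).symm, ?_⟩
        have hc2 : H.card = 2 := hpure H hHC
        have hle : (H ∩ G).card ≤ 2 :=
          le_trans (Finset.card_le_card Finset.inter_subset_left) (le_of_eq hc2)
        have hge : 1 ≤ (H ∩ G).card := Finset.card_pos.mpr ⟨x₀, hx₀⟩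
        have hne2 : (H ∩ G).card ≠ 2 := by
          intro hc
          apply hHG'
          have h1 : H ∩ G = H := Finset.eq_of_subset_of_card_le Finset.inter_subset_left
            (by omega)
          have h2 : H ∩ G = G := Finset.eq_of_subset_of_card_le Finset.inter_subset_right
            (by rw [hpure G hG]; omega)
          rw [← h1, h2]
        omega
      have hgd : ∀ w, drops w (glue P₁ [H, G]) = drops w P₁ + drops w [H, G] :=
        fun w => glue_drops hHlast rfl
      refine ⟨glue P₁ [H, G], glue_ne_nil hne, by rw [glue_head? hne]; exact hhead,
        by rw [glue_getLast? (Q := [H, G]) hne hHlast rfl]; rfl, ?_, ?_, ?_⟩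
      · intro X hX
        rcases glue_mem hX with h | h
        · exact hmem X h
        · rcases List.mem_cons.mp h with rfl | h
          · exact hHC
          · rcases List.mem_singleton.mp h with rfl
            exact hG
      · exact glue_chain' hHlast rfl hchain (List.isChain_pair.mpr hadjHG)
      · intro w
        rw [hgd w]
        have hd2 : drops w [H, G] = if w ∈ H ∧ w ∉ G then 1 else 0 := by
          rw [drops_cons_cons, drops_single, add_zero]
        rw [hd2]
        by_cases hcase : w ∈ H ∧ w ∉ G
        · rw [if_pos hcase, hlast0 rfl H hHlast w hcase.1]
          simp
        · rw [if_neg hcase, add_zero]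
          simpa using hdrops w
  · -- step case 3 ≤ k
    have hexp : k - 1 - 2 = k - 3 := by omega
    have hpowsum : 2 ^ (k - 3) + 2 ^ (k - 3) = 2 ^ (k - 2) := by
      rw [show k - 2 = (k - 3) + 1 by omega, pow_succ]
      ring
    obtain ⟨P₁, hne, hhead, hmem, hchain, holm1, holm2, hii, hdrops, _⟩ :=
      master k hk C G F hnormal hpure hF hGmeet
    obtain ⟨H, hHlast, hHG⟩ := holm2
    obtain ⟨x₀, hx₀⟩ := hHG
    have hx₀H : x₀ ∈ H := (Finset.mem_inter.mp hx₀).1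
    have hx₀G : x₀ ∈ G := (Finset.mem_inter.mp hx₀).2
    have hHC : H ∈ C := hmem H (mem_of_getLast? hHlast)
    obtain ⟨Q₂, hne₂, hhead₂, hlast₂, hmem₂, hchain₂, hdrops₂⟩ :=
      IHk (k - 1) (by omega) (by omega) (link C x₀) (H.erase x₀) (G.erase x₀)
        (link_normal hnormal) (link_pure hpure) (erase_mem_link hHC hx₀H)
        (erase_mem_link hG hx₀G)
    have hxnot : ∀ f ∈ Q₂, x₀ ∉ f := fun f hf => not_mem_of_mem_link (hmem₂ f hf)
    set P₂ : List (Finset V) := Q₂.map (insert x₀) with hP₂def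
    have hne₂' : P₂ ≠ [] := by rw [hP₂def]; simpa using hne₂
    have hheadP₂ : P₂.head? = some H := by
      rw [hP₂def, List.head?_map, hhead₂]
      simp [Finset.insert_erase hx₀H]
    have hlastP₂ : P₂.getLast? = some G := by
      rw [hP₂def, List.getLast?_map, hlast₂]
      simp [Finset.insert_erase hx₀G]
    have hmemP₂ : ∀ X ∈ P₂, X ∈ C := by
      intro X hX
      obtain ⟨f, hf, rfl⟩ := List.mem_map.mp hX
      exact insert_mem_of_mem_link (hmem₂ f hf)
    have hchainP₂ : P₂.Chain' AdjFacets := chain'_insert x₀ hxnot hchain₂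
    have hgd : ∀ w, drops w (glue P₁ P₂) = drops w P₁ + drops w P₂ :=
      fun w => glue_drops hHlast hheadP₂
    refine ⟨glue P₁ P₂, glue_ne_nil hne, by rw [glue_head? hne]; exact hhead,
      by rw [glue_getLast? hne hHlast hheadP₂]; exact hlastP₂, ?_, ?_, ?_⟩
    · intro X hX
      rcases glue_mem hX with h | h
      · exact hmem X h
      · exact hmemP₂ X h
    · exact glue_chain' hHlast hheadP₂ hchain hchainP₂
    · intro w
      rw [hgd w]
      by_cases hwx : w = x₀
      · rw [hwx, drops_map_insert_self, add_zero,
          drops_eq_zero_of_olm hx₀G holm1]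
        exact Nat.zero_le _
      have hd2 : drops w P₂ = drops w Q₂ := drops_map_insert hwx
      by_cases hwv : w ∈ verts (link C x₀)
      · by_cases hwG : w ∈ G
        · rw [drops_eq_zero_of_olm hwG holm1, zero_add, hd2]
          calc drops w Q₂ ≤ 2 ^ (k - 1 - 2) := hdrops₂ w
            _ ≤ 2 ^ (k - 2) := Nat.pow_le_pow_right (by omega) (by omega)
        · -- lev C G w = 1
          have hadj : (skeleton C).Adj x₀ w := adj_of_mem_verts_link hwv
          have hlev1 : lev C G w = 1 := by
            have hle : lev C G w ≤ 1 := by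
              calc lev C G w ≤ (skeleton C).edist w x₀ := lev_le hx₀G
                _ = 1 := SimpleGraph.edist_eq_one_iff_adj.mpr hadj.symm
            have hne0 : lev C G w ≠ 0 := fun hc => hwG (mem_of_lev_eq_zero hc)
            exact le_antisymm hle (ENat.one_le_iff_ne_zero.mpr hne0)
          have hd1 : drops w P₁ ≤ 2 ^ (k - 3) := hii w hlev1
          have hd2' : drops w Q₂ ≤ 2 ^ (k - 3) := by
            rw [← hexp]; exact hdrops₂ w
          calc drops w P₁ + drops w P₂ ≤ 2 ^ (k - 3) + 2 ^ (k - 3) := by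
                rw [hd2]; exact add_le_add hd1 hd2'
            _ = 2 ^ (k - 2) := hpowsum
      · have hd2' : drops w P₂ = 0 := by
          apply drops_eq_zero_of_not_mem
          intro X hX hwX
          obtain ⟨f, hf, rfl⟩ := List.mem_map.mp hX
          rcases Finset.mem_insert.mp hwX with rfl | hwf
          · exact hwx rfl
          · exact hwv (mem_verts_of_mem_facet (hmem₂ f hf) hwf)
        rw [hd2', add_zero]
        exact hdrops w

end BL

open MCP in
/-- Barnette–Larman bound for the dual diameter: in a pure normal
`(d-1)`-complex on `n` vertices with `d ≥ 2`, any two facets are joined by a dual path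
of length at most `n * 2 ^ (d - 2)`. -/
theorem statement12 {V : Type} [DecidableEq V] [Fintype V] (d n : ℕ) (hd : 2 ≤ d)
    (C : Finset (Finset V)) (hpure : Pure C d) (hnormal : Normal C)
    (hn : (verts C).card = n) :
    ∀ F ∈ C, ∀ G ∈ C, ∃ P : List (Finset V), IsDualPath C P ∧
      P.head? = some F ∧ P.getLast? = some G ∧ P.length - 1 ≤ n * 2 ^ (d - 2) := by
  intro F hF G hG
  obtain ⟨P, hne, hhead, hlast, hmem, hchain, hdrops⟩ :=
    BL.btheorem d hd C F G hnormal hpure hF hG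
  refine ⟨P, ⟨hmem, hchain⟩, hhead, hlast, ?_⟩
  rw [BL.length_eq_sum_drops hchain]
  have hzero : ∀ w ∈ Finset.univ, w ∉ verts C → BL.drops w P = 0 := by
    intro w _ hw
    apply BL.drops_eq_zero_of_not_mem
    intro X hX hwX
    exact hw (BL.mem_verts_of_mem_facet (hmem X hX) hwX)
  calc ∑ w, BL.drops w P = ∑ w ∈ verts C, BL.drops w P :=
        (Finset.sum_subset (Finset.subset_univ _) hzero).symm
    _ ≤ ∑ _w ∈ verts C, 2 ^ (d - 2) := Finset.sum_le_sum (fun w _ => hdrops w)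
    _ = n * 2 ^ (d - 2) := by rw [Finset.sum_const, hn, smul_eq_mul]
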